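/- The compositional inverse G(X) of the Prouhet–Thue–Morse series over F_2 satisfies X^3 G(X)^4 + (1+X) G(X) + X(X^2+1) = 0, equivalently X^3 G(X^4) + (1+X) G(X) + X^3 + X = 0. -/

import Mathlib

open PowerSeries

namespace PTMAux

noncomputable def pcomp (f A : PowerSeries (ZMod 2)) : PowerSeries (ZMod 2) :=
  PowerSeries.mk fun k =>
    coeff k (Polynomial.aeval f (trunc (k + 1) A))

variable {f : PowerSeries (ZMod 2)}

lemma X_pow_dvd_pow (hf : constantCoeff f = 0) (n : ℕ) :
    (X : PowerSeries (ZMod 2)) ^ n ∣ f ^ n :=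
  pow_dvd_pow_of_dvd (X_dvd_iff.2 hf) n

lemma coeff_aeval_of_dvd (hf : constantCoeff f = 0)
    {P : Polynomial (ZMod 2)} {k : ℕ} (h : Polynomial.X ^ (k + 1) ∣ P) :
    coeff k (Polynomial.aeval f P) = 0 := by
  obtain ⟨E, rfl⟩ := h
  rw [map_mul, map_pow, Polynomial.aeval_X]
  obtain ⟨g, hg⟩ := X_pow_dvd_pow hf (k + 1)
  rw [hg, mul_assoc]
  exact X_pow_dvd_iff.mp (dvd_mul_right _ _) k (Nat.lt_succ_self k)

lemma coeff_aeval_congr (hf : constantCoeff f = 0)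
    {P Q : Polynomial (ZMod 2)} {k : ℕ}
    (h : ∀ d, d ≤ k → P.coeff d = Q.coeff d) :
    coeff k (Polynomial.aeval f P) = coeff k (Polynomial.aeval f Q) := by
  have h2 : coeff k (Polynomial.aeval f (P - Q)) = 0 := by
    apply coeff_aeval_of_dvd hf
    rw [Polynomial.X_pow_dvd_iff]
    intro d hd
    rw [Polynomial.coeff_sub, h d (by omega), sub_self]
  rw [map_sub, map_sub] at h2
  exact sub_eq_zero.mp h2

lemma coeff_pcomp (hf : constantCoeff f = 0) (A : PowerSeries (ZMod 2))
    {k m : ℕ} (h : k < m) :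
    coeff k (pcomp f A) = coeff k (Polynomial.aeval f (trunc m A)) := by
  rw [pcomp, coeff_mk]
  apply coeff_aeval_congr hf
  intro d hd
  rw [coeff_trunc, coeff_trunc, if_pos (by omega), if_pos (by omega)]

lemma coeff_pcomp_sum (A : PowerSeries (ZMod 2)) (k : ℕ) :
    coeff k (pcomp f A) =
      ∑ n ∈ Finset.range (k + 1), coeff n A * coeff k (f ^ n) := by
  rw [pcomp, coeff_mk,
    Polynomial.aeval_eq_sum_range' (natDegree_trunc_lt A k) f, map_sum]
  refine Finset.sum_congr rfl fun n hn => ?_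
  rw [Finset.mem_range] at hn
  rw [coeff_smul, coeff_trunc, if_pos hn, smul_eq_mul]

lemma pcomp_add (hf : constantCoeff f = 0) (A B : PowerSeries (ZMod 2)) :
    pcomp f (A + B) = pcomp f A + pcomp f B := by
  ext k
  rw [map_add, pcomp, pcomp, pcomp, coeff_mk, coeff_mk, coeff_mk, map_add, map_add, map_add]

lemma pcomp_mul (hf : constantCoeff f = 0) (A B : PowerSeries (ZMod 2)) :
    pcomp f (A * B) = pcomp f A * pcomp f B := by
  ext k
  rw [coeff_mul]
  have hs : ∀ p ∈ Finset.HasAntidiagonal.antidiagonal k,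
      coeff p.1 (pcomp f A) * coeff p.2 (pcomp f B) =
      coeff p.1 (Polynomial.aeval f (trunc (k + 1) A)) *
        coeff p.2 (Polynomial.aeval f (trunc (k + 1) B)) := by
    intro p hp
    rw [Finset.HasAntidiagonal.mem_antidiagonal] at hp
    rw [coeff_pcomp hf A (show p.1 < k + 1 by omega), coeff_pcomp hf B (show p.2 < k + 1 by omega)]
  rw [Finset.sum_congr rfl hs, ← coeff_mul, ← map_mul]
  rw [pcomp, coeff_mk]
  apply coeff_aeval_congr hf
  intro d hd
  rw [coeff_trunc, if_pos (by omega)]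
  have := coeff_mul_eq_coeff_trunc_mul_trunc (R := ZMod 2) (n := k + 1) A B (by omega : d < k + 1)
  rw [this, ← Polynomial.coeff_coe, Polynomial.coe_mul]

lemma pcomp_one (hf : constantCoeff f = 0) : pcomp f 1 = 1 := by
  ext k
  rw [pcomp, coeff_mk, trunc_one, map_one]

lemma pcomp_X (hf : constantCoeff f = 0) : pcomp f X = f := by
  ext k
  rw [coeff_pcomp hf X (show k < k + 2 by omega), trunc_X_of (by omega), Polynomial.aeval_X]

lemma pcomp_pow (hf : constantCoeff f = 0) (A : PowerSeries (ZMod 2)) (n : ℕ) :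
    pcomp f (A ^ n) = pcomp f A ^ n := by
  induction n with
  | zero => simpa using pcomp_one hf
  | succ n ih => rw [pow_succ, pow_succ, pcomp_mul hf, ih]

lemma pcomp_eq_zero (hf : constantCoeff f = 0)
    (hf1 : coeff 1 f = 1) {A : PowerSeries (ZMod 2)}
    (h : pcomp f A = 0) : A = 0 := by
  obtain ⟨g, hg⟩ := X_dvd_iff.2 hf
  have hg0 : constantCoeff g = 1 := by
    have := coeff_succ_X_mul 0 g
    rw [← hg, hf1] at this
    rw [← coeff_zero_eq_constantCoeff, ← this]
  have hfk : ∀ k, coeff k (f ^ k) = 1 := by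
    intro k
    have hx := coeff_X_pow_mul (g ^ k) k 0
    rw [zero_add] at hx
    rw [hg, mul_pow, hx, coeff_zero_eq_constantCoeff, map_pow, hg0, one_pow]
  have hzero : ∀ n k, k < n → coeff k (f ^ n) = 0 := by
    intro n k hk
    exact X_pow_dvd_iff.mp (X_pow_dvd_pow hf n) k hk
  have key : ∀ k, coeff k A = 0 := by
    intro k
    induction k using Nat.strong_induction_on with
    | _ k ih =>
      have h0 := congrArg (coeff k) h
      rw [coeff_pcomp_sum, map_zero, Finset.sum_range_succ, hfk] at h0
      have : ∀ n ∈ Finset.range k, coeff n A * coeff k (f ^ n) = 0 := by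
        intro n hn
        rw [Finset.mem_range] at hn
        rw [ih n hn, zero_mul]
      rw [Finset.sum_congr rfl this, Finset.sum_const_zero, zero_add, mul_one] at h0
      exact h0
  ext k
  rw [key k, map_zero]

lemma coeff_sq (A : PowerSeries (ZMod 2)) (n : ℕ) :
    coeff n (A ^ 2) =
      if n % 2 = 0 then coeff (n / 2) A else 0 := by
  rw [sq, coeff_mul]
  rw [← Finset.sum_filter_add_sum_filter_not (Finset.HasAntidiagonal.antidiagonal n) (fun p => p.1 = p.2)]
  have h1 : (Finset.HasAntidiagonal.antidiagonal n).filter (fun p => p.1 = p.2) =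
      if n % 2 = 0 then {(n / 2, n / 2)} else ∅ := by
    ext p
    simp only [Finset.mem_filter, Finset.HasAntidiagonal.mem_antidiagonal]
    split_ifs with h
    · simp only [Finset.mem_singleton, Prod.ext_iff]
      omega
    · simp only [Finset.notMem_empty, iff_false, not_and]
      omega
  have h2 : ∑ p ∈ (Finset.HasAntidiagonal.antidiagonal n).filter (fun p => ¬ p.1 = p.2),
      coeff p.1 A * coeff p.2 A = 0 := by
    apply Finset.sum_involution (fun p _ => (p.2, p.1))
    · intro p hp
      have : ∀ x : ZMod 2, x + x = 0 := by decide
      rw [mul_comm]; exact this _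
    · intro p hp _
      simp only [Finset.mem_filter] at hp
      intro hc
      apply hp.2
      have h1 : p.2 = p.1 := congrArg Prod.fst hc
      omega
    · intro p hp
      simp only [Finset.mem_filter, Finset.HasAntidiagonal.mem_antidiagonal] at hp ⊢
      omega
    · intro p hp; rfl
  rw [h1, h2, add_zero]
  split_ifs with h
  · rw [Finset.sum_singleton]
    have : ∀ x : ZMod 2, x * x = x := by decide
    exact this _
  · rw [Finset.sum_empty]


lemma E0 (t : ℕ → ZMod 2) (h0 : t 0 = 0) (he : ∀ n, t (2 * n) = t n)
    (ho : ∀ n, t (2 * n + 1) = 1 + t n) :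
    (mk t) ^ 2 + mk t + (mk t) ^ 2 * X ^ 1 + X + (mk t) ^ 2 * X ^ 2 + mk t * X ^ 2 +
      (mk t) ^ 2 * X ^ 3 = 0 := by
  have h2z : (2 : ZMod 2) = 0 := by decide
  have hcF : ∀ j, coeff j ((mk t) ^ 2) = if j % 2 = 0 then t (j / 2) else 0 := by
    intro j
    rw [coeff_sq, coeff_mk]
  ext n
  rw [map_add, map_add, map_add, map_add, map_add, map_add, map_zero]
  rw [coeff_mul_X_pow', coeff_mul_X_pow', coeff_mul_X_pow', coeff_mul_X_pow']
  simp only [hcF, coeff_mk, coeff_X]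
  rcases Nat.even_or_odd n with ⟨m, hm⟩ | ⟨m, hm⟩
  · subst hm
    cases m with
    | zero => norm_num [h0]
    | succ m =>
      have d1 : (m + 1 + (m + 1)) / 2 = m + 1 := by omega
      have d2 : (m + 1 + (m + 1) - 2) / 2 = m := by omega
      have e1 : t (m + 1 + (m + 1)) = t (m + 1) := by
        have := he (m + 1); rw [show 2 * (m + 1) = m + 1 + (m + 1) by ring] at this
        exact this
      have e2 : t (m + 1 + (m + 1) - 2) = t m := by
        have := he m; rw [show 2 * m = m + 1 + (m + 1) - 2 by omega] at this
        exact this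
      split_ifs <;> try omega
      all_goals rw [d1, d2, e1, e2]
      all_goals linear_combination (t (m + 1) + t m) * h2z
  · subst hm
    cases m with
    | zero =>
      have h1 : t 1 = 1 := by have := ho 0; simpa [h0] using this
      norm_num [h0, h1]
      exact h2z
    | succ m =>
      have d1 : (2 * (m + 1) + 1 - 1) / 2 = m + 1 := by omega
      have d2 : (2 * (m + 1) + 1 - 3) / 2 = m := by omega
      have e1 : t (2 * (m + 1) + 1) = 1 + t (m + 1) := ho (m + 1)
      have e2 : t (2 * (m + 1) + 1 - 1) = t (m + 1) := by
        have := he (m + 1); rw [show 2 * (m + 1) = 2 * (m + 1) + 1 - 1 by omega] at this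
        exact this
      have e3 : t (2 * (m + 1) + 1 - 2) = 1 + t m := by
        have := ho m; rw [show 2 * m + 1 = 2 * (m + 1) + 1 - 2 by omega] at this
        exact this
      have e4 : t (2 * (m + 1) + 1 - 3) = t m := by
        have := he m; rw [show 2 * m = 2 * (m + 1) + 1 - 3 by omega] at this
        exact this
      split_ifs <;> try omega
      all_goals rw [d1, d2, e1, e3]
      all_goals linear_combination (1 + t (m + 1) + t m) * h2z

end PTMAux


/-- The compositional inverse `G` of the Prouhet–Thue–Morse series over `𝔽₂`
satisfies `X³G⁴ + (1+X)G + X(X²+1) = 0`, equivalently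
`X³G(X⁴) + (1+X)G(X) + X³ + X = 0`, where `G(X⁴)` is the series whose
`4n`-th coefficient is the `n`-th coefficient of `G` and whose other
coefficients vanish. -/
theorem inverse_ptm_quartic_equation (t : ℕ → ZMod 2) (h0 : t 0 = 0)
    (he : ∀ n, t (2 * n) = t n) (ho : ∀ n, t (2 * n + 1) = 1 + t n)
    (G : PowerSeries (ZMod 2)) (hG0 : constantCoeff G = 0)
    (hFG : ∀ k : ℕ, coeff k
      (∑ n ∈ Finset.range (k + 1), PowerSeries.C (t n) * G ^ n) =
      coeff k X)
    (hGF : ∀ k : ℕ, coeff k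
      (∑ n ∈ Finset.range (k + 1),
        PowerSeries.C (coeff n G) * (PowerSeries.mk t) ^ n) =
      coeff k X) :
    X ^ 3 * G ^ 4 + (1 + X) * G + X * (X ^ 2 + 1) = 0 ∧
    X ^ 3 * (PowerSeries.mk fun n =>
        if n % 4 = 0 then coeff (n / 4) G else 0) +
      (1 + X) * G + X ^ 3 + X = 0 := by
  have h2z : (2 : ZMod 2) = 0 := by decide
  have htwo : (2 : PowerSeries (ZMod 2)) = 0 := by
    rw [show (2 : PowerSeries (ZMod 2)) = PowerSeries.C 2 from
      (map_ofNat _ 2).symm, h2z, map_zero]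
  set F := PowerSeries.mk t with hFdef
  have hFc0 : constantCoeff F = 0 := by rw [hFdef, constantCoeff_mk]; exact h0
  have hF1 : coeff 1 F = 1 := by
    rw [hFdef, coeff_mk]
    have := ho 0; simpa [h0] using this
  have hcompG : PTMAux.pcomp F G = X := by
    ext k
    rw [PTMAux.coeff_pcomp_sum, ← hGF k, map_sum]
    exact Finset.sum_congr rfl fun n _ => (coeff_C_mul _ _ _).symm
  have hE := PTMAux.E0 t h0 he ho
  rw [← hFdef] at hE
  have hH : X * (X + 1) + (X + 1) ^ 2 * G + X * (X + 1) * G ^ 2 + X ^ 2 * G ^ 3 = 0 := by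
    apply PTMAux.pcomp_eq_zero hFc0 hF1
    have expand : PTMAux.pcomp F
        (X * (X + 1) + (X + 1) ^ 2 * G + X * (X + 1) * G ^ 2 + X ^ 2 * G ^ 3)
        = F * (F + 1) + (F + 1) ^ 2 * X + F * (F + 1) * X ^ 2 + F ^ 2 * X ^ 3 := by
      simp only [PTMAux.pcomp_add hFc0, PTMAux.pcomp_mul hFc0, PTMAux.pcomp_pow hFc0,
        PTMAux.pcomp_X hFc0, PTMAux.pcomp_one hFc0, hcompG]
    rw [expand]
    linear_combination hE + (F * X) * htwo
  have h1 : X ^ 3 * G ^ 4 + (1 + X) * G + X * (X ^ 2 + 1) = 0 := by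
    linear_combination (1 + X + X * G) * hH +
      (-(X * G) - X * G ^ 2 - X ^ 2 - 2 * X ^ 2 * G - 2 * X ^ 2 * G ^ 2 - X ^ 2 * G ^ 3
        - X ^ 3 * G - X ^ 3 * G ^ 2 - X ^ 3 * G ^ 3) * htwo
  have hmk : (PowerSeries.mk fun n =>
      if n % 4 = 0 then coeff (n / 4) G else 0) = G ^ 4 := by
    ext n
    rw [coeff_mk, show (G : PowerSeries (ZMod 2)) ^ 4 = (G ^ 2) ^ 2 by ring,
      PTMAux.coeff_sq, PTMAux.coeff_sq]
    by_cases h4 : n % 4 = 0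
    · rw [if_pos h4, if_pos (by omega), if_pos (by omega), show n / 2 / 2 = n / 4 by omega]
    · rw [if_neg h4]
      by_cases h2 : n % 2 = 0
      · rw [if_pos h2, if_neg (by omega)]
      · rw [if_neg h2]
  exact ⟨h1, by rw [hmk]; linear_combination h1⟩
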